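/- Let A ∈ C^{n×n×p} be an invertible tensor and α a nonzero complex number. Then there exists a tensor B ∈ C^{n×n×p} with B^α = A; in particular for each positive integer m the equation X^m = A (m-fold T-product) has a solution. -/

import Mathlib

open Matrix Kronecker Complex Polynomial

set_option synthInstance.maxHeartbeats 1000000
set_option maxHeartbeats 2000000
set_option linter.unusedSectionVars false

noncomputable section

/-- Block circulant matrix of a third-order tensor given by its frontal slices. -/
def bcirc {m n p : ℕ} (A : Fin p → Matrix (Fin m) (Fin n) ℂ) :
    Matrix (Fin p × Fin m) (Fin p × Fin n) ℂ :=
  Matrix.of fun jr kc => A (jr.1 - kc.1) jr.2 kc.2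

/-- The tensor T-product. -/
def tmul {m n s p : ℕ} (A : Fin p → Matrix (Fin m) (Fin n) ℂ)
    (B : Fin p → Matrix (Fin n) (Fin s) ℂ) : Fin p → Matrix (Fin m) (Fin s) ℂ :=
  fun i => ∑ j : Fin p, A (i - j) * B j

/-- The identity tensor. -/
def tId {n p : ℕ} [NeZero p] : Fin p → Matrix (Fin n) (Fin n) ℂ :=
  fun i => if i = 0 then 1 else 0

/-- T-product powers of a tensor. -/
def tpow {n p : ℕ} [NeZero p] (A : Fin p → Matrix (Fin n) (Fin n) ℂ) : ℕ → Fin p → Matrix (Fin n) (Fin n) ℂ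
  | 0 => tId
  | k + 1 => tmul (tpow A k) A

/-- Conjugate transpose of a tensor. -/
def tconjT {m n p : ℕ} [NeZero p] (A : Fin p → Matrix (Fin m) (Fin n) ℂ) :
    Fin p → Matrix (Fin n) (Fin m) ℂ :=
  fun i => (A (-i))ᴴ

/-- Invertibility with respect to the T-product. -/
def TInvertible {n p : ℕ} [NeZero p] (A : Fin p → Matrix (Fin n) (Fin n) ℂ) : Prop :=
  ∃ B, tmul A B = tId ∧ tmul B A = tId

/-- `fold` of an `np × n` matrix back into a tensor (first block column). -/
def tfold {n p : ℕ} [NeZero p] (M : Matrix (Fin p × Fin n) (Fin p × Fin n) ℂ) :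
    Fin p → Matrix (Fin n) (Fin n) ℂ :=
  fun i => Matrix.of fun r c => M (i, r) ((0 : Fin p), c)

/-- The primitive root ω = e^{-2πi/p}. -/
def tomega (p : ℕ) : ℂ := Complex.exp (-2 * Real.pi * Complex.I / p)

/-- The (unitary) discrete Fourier matrix. -/
def fourierMat (p : ℕ) : Matrix (Fin p) (Fin p) ℂ :=
  Matrix.of fun j k => tomega p ^ ((j : ℕ) * (k : ℕ)) / Real.sqrt p

/-- Block diagonal matrix with `p` diagonal blocks of size `n × n`. -/
def bdiag {n p : ℕ} (B : Fin p → Matrix (Fin n) (Fin n) ℂ) :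
    Matrix (Fin p × Fin n) (Fin p × Fin n) ℂ :=
  Matrix.of fun jr kc => if jr.1 = kc.1 then B jr.1 jr.2 kc.2 else 0


/-- The tensor exponential T-function: `exp(A) = fold (exp(bcirc A) · Ê₁)`. -/
def texp {n p : ℕ} [NeZero p] (A : Fin p → Matrix (Fin n) (Fin n) ℂ) :
    Fin p → Matrix (Fin n) (Fin n) ℂ :=
  tfold (NormedSpace.exp (bcirc A))

section Aux

variable {n p : ℕ} [NeZero p]

lemma tfold_bcirc (A : Fin p → Matrix (Fin n) (Fin n) ℂ) : tfold (bcirc A) = A := by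
  funext i
  ext r c
  simp [tfold, bcirc]

lemma bcirc_injective : Function.Injective (bcirc (m := n) (n := n) (p := p)) := by
  intro A B h
  rw [← tfold_bcirc A, ← tfold_bcirc B, h]

lemma bcirc_tmul (A B : Fin p → Matrix (Fin n) (Fin n) ℂ) :
    bcirc (tmul A B) = bcirc A * bcirc B := by
  ext ⟨i, r⟩ ⟨j, c⟩
  rw [Matrix.mul_apply]
  simp only [bcirc, tmul, Matrix.of_apply, Matrix.sum_apply, Matrix.mul_apply]
  rw [show (∑ x : Fin p × Fin n, A (i - x.1) r x.2 * B (x.1 - j) x.2 c)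
      = ∑ k : Fin p, ∑ s : Fin n, A (i - k) r s * B (k - j) s c from Fintype.sum_prod_type _]
  refine Fintype.sum_equiv (Equiv.addRight j) _ _ ?_
  intro k
  refine Finset.sum_congr rfl fun s _ => ?_
  simp [sub_sub, add_comm]

lemma bcirc_tId : bcirc (tId : Fin p → Matrix (Fin n) (Fin n) ℂ) = 1 := by
  ext ⟨i, r⟩ ⟨j, c⟩
  simp only [bcirc, tId, Matrix.of_apply]
  rcases eq_or_ne i j with h | h
  · simp [h, Matrix.one_apply, Prod.ext_iff]
  · rw [if_neg (by simpa [sub_eq_zero] using h), Matrix.one_apply_ne (by simp [Prod.ext_iff, h])]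
    simp

omit [NeZero p] in
lemma bcirc_smul (c : ℂ) (A : Fin p → Matrix (Fin n) (Fin n) ℂ) :
    bcirc (c • A) = c • bcirc A := rfl


/-- Shift invariance: the defining property of block circulant matrices. -/
def bcShift (M : Matrix (Fin p × Fin n) (Fin p × Fin n) ℂ) : Prop :=
  ∀ i j r c, M (i + 1, r) (j + 1, c) = M (i, r) (j, c)

lemma bcShift_bcirc (A : Fin p → Matrix (Fin n) (Fin n) ℂ) : bcShift (bcirc A) := by
  intro i j r c
  simp [bcirc]

lemma bcShift_add {M N : Matrix (Fin p × Fin n) (Fin p × Fin n) ℂ} (hM : bcShift M) (hN : bcShift N) :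
    bcShift (M + N) := fun i j r c => by
  simp only [Matrix.add_apply, hM i j r c, hN i j r c]

lemma bcShift_smul (c₀ : ℂ) {M : Matrix (Fin p × Fin n) (Fin p × Fin n) ℂ} (hM : bcShift M) : bcShift (c₀ • M) := fun i j r c => by
  simp only [Matrix.smul_apply, hM i j r c, smul_eq_mul]

lemma bcShift_mul {M N : Matrix (Fin p × Fin n) (Fin p × Fin n) ℂ} (hM : bcShift M) (hN : bcShift N) :
    bcShift (M * N) := by
  intro i j r c
  rw [Matrix.mul_apply, Matrix.mul_apply]
  refine Fintype.sum_equiv ((Equiv.subRight (1 : Fin p)).prodCongr (Equiv.refl (Fin n))) _ _ ?_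
  rintro ⟨k, s⟩
  simp only [Equiv.prodCongr_apply, Equiv.subRight_apply, Equiv.refl_apply, Prod.map_apply, id_eq]
  rw [← hM i (k - 1) r s, ← hN (k - 1) j s c, sub_add_cancel]

lemma bcShift_one : bcShift (1 : Matrix (Fin p × Fin n) (Fin p × Fin n) ℂ) := by
  rw [← bcirc_tId]; exact bcShift_bcirc _

lemma bcShift_zero : bcShift (0 : Matrix (Fin p × Fin n) (Fin p × Fin n) ℂ) := fun _ _ _ _ => rfl

lemma bcShift_pow {M : Matrix (Fin p × Fin n) (Fin p × Fin n) ℂ} (hM : bcShift M) (k : ℕ) :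
    bcShift (M ^ k) := by
  induction k with
  | zero => rw [pow_zero]; exact bcShift_one
  | succ k ih => rw [pow_succ]; exact bcShift_mul ih hM

lemma bcShift_adjoin {M C : Matrix (Fin p × Fin n) (Fin p × Fin n) ℂ} (hM : bcShift M)
    (hC : C ∈ Algebra.adjoin ℂ {M}) : bcShift C := by
  induction hC using Algebra.adjoin_induction with
  | mem x hx => rw [Set.mem_singleton_iff] at hx; rwa [hx]
  | algebraMap c =>
    have : (algebraMap ℂ (Matrix (Fin p × Fin n) (Fin p × Fin n) ℂ)) c = c • 1 :=
      Algebra.algebraMap_eq_smul_one c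
    rw [this]; exact bcShift_smul c bcShift_one
  | add x y _ _ hx hy => exact bcShift_add hx hy
  | mul x y _ _ hx hy => exact bcShift_mul hx hy

lemma bcShift_isClosed : IsClosed {M : Matrix (Fin p × Fin n) (Fin p × Fin n) ℂ | bcShift M} := by
  have : {M : Matrix (Fin p × Fin n) (Fin p × Fin n) ℂ | bcShift M} =
      ⋂ (i) (j) (r) (c), {M : Matrix (Fin p × Fin n) (Fin p × Fin n) ℂ |
        M (i + 1, r) (j + 1, c) = M (i, r) (j, c)} := by
    ext M
    simp [bcShift, Set.mem_iInter]
  rw [this]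
  refine isClosed_iInter fun i => isClosed_iInter fun j =>
    isClosed_iInter fun r => isClosed_iInter fun c => isClosed_eq ?_ ?_ <;>
  · exact (continuous_apply _).comp (continuous_apply _)

lemma bcShift_exp {M : Matrix (Fin p × Fin n) (Fin p × Fin n) ℂ} (hM : bcShift M) :
    bcShift (NormedSpace.exp M) := by
  letI : SeminormedRing (Matrix (Fin p × Fin n) (Fin p × Fin n) ℂ) := Matrix.linftyOpSemiNormedRing
  letI : NormedRing (Matrix (Fin p × Fin n) (Fin p × Fin n) ℂ) := Matrix.linftyOpNormedRing
  letI : NormedAlgebra ℂ (Matrix (Fin p × Fin n) (Fin p × Fin n) ℂ) := Matrix.linftyOpNormedAlgebra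
  have hsum := NormedSpace.exp_series_hasSum_exp' (𝕂 := ℂ) M
  have htend := hsum.tendsto_sum_nat
  refine bcShift_isClosed.mem_of_tendsto htend (Filter.Eventually.of_forall fun k => ?_)
  have : ∀ K : ℕ, bcShift (∑ i ∈ Finset.range K, ((Nat.factorial i : ℂ)⁻¹ • M ^ i)) := by
    intro K
    induction K with
    | zero => simpa using bcShift_zero
    | succ K ih =>
      rw [Finset.sum_range_succ]
      exact bcShift_add ih (bcShift_smul _ (bcShift_pow hM K))
  exact this k

open Fin.NatCast in
lemma bcShift_nat_shift {M : Matrix (Fin p × Fin n) (Fin p × Fin n) ℂ} (hM : bcShift M)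
    (k : ℕ) (i j : Fin p) (r c : Fin n) :
    M (i + (k : Fin p), r) (j + (k : Fin p), c) = M (i, r) (j, c) := by
  induction k with
  | zero => simp
  | succ k ih =>
    have : ((k + 1 : ℕ) : Fin p) = (k : Fin p) + 1 := by exact Nat.cast_succ k
    rw [this, ← add_assoc, ← add_assoc, hM, ih]

open Fin.NatCast in
lemma bcirc_tfold_of_bcShift {M : Matrix (Fin p × Fin n) (Fin p × Fin n) ℂ} (hM : bcShift M) :
    bcirc (tfold M) = M := by
  ext ⟨i, r⟩ ⟨j, c⟩
  show tfold M (i - j) r c = M (i, r) (j, c)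
  show M (i - j, r) (0, c) = M (i, r) (j, c)
  have := bcShift_nat_shift hM j.val (i - j) 0 r c
  rw [Fin.cast_val_eq_self] at this
  rw [← this, sub_add_cancel, zero_add]


section AnalyticCore

open Topology Filter

variable {N : Type*} [Fintype N] [DecidableEq N]

lemma commute_adjoin {M x y : Matrix N N ℂ} (hx : x ∈ Algebra.adjoin ℂ {M})
    (hy : y ∈ Algebra.adjoin ℂ {M}) : Commute x y := by
  rw [Algebra.adjoin_singleton_eq_range_aeval] at hx hy
  obtain ⟨q, rfl⟩ := hx
  obtain ⟨r, rfl⟩ := hy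
  exact (Commute.all q r).map (Polynomial.aeval M).toRingHom

lemma subalgebra_isUnit_of_isUnit (S : Subalgebra ℂ (Matrix N N ℂ)) (x : S)
    (hx : IsUnit (x : Matrix N N ℂ)) : IsUnit x := by
  have hdet : IsUnit (Matrix.det (x : Matrix N N ℂ)) := (Matrix.isUnit_iff_isUnit_det _).1 hx
  set χ := Matrix.charpoly (x : Matrix N N ℂ) with hχ
  have hc0 : χ.coeff 0 ≠ 0 := by
    intro h0
    have h := Matrix.det_eq_sign_charpoly_coeff (x : Matrix N N ℂ)
    rw [← hχ, h0, mul_zero] at h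
    exact hdet.ne_zero h
  have hval : Polynomial.aeval x χ = 0 := by
    have h1 : S.val (Polynomial.aeval x χ) = 0 := by
      rw [← Polynomial.aeval_algHom_apply S.val x χ]
      exact Matrix.aeval_self_charpoly _
    exact Subtype.coe_injective h1
  set z : S := algebraMap ℂ S (-(χ.coeff 0)⁻¹) * Polynomial.aeval x χ.divX with hz
  have hxz : x * Polynomial.aeval x χ.divX + algebraMap ℂ S (χ.coeff 0) = 0 := by
    have := congrArg (Polynomial.aeval x) (Polynomial.X_mul_divX_add χ)
    rw [map_add, _root_.map_mul, Polynomial.aeval_X, Polynomial.aeval_C, hval] at this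
    exact this
  have hxy : x * Polynomial.aeval x χ.divX = -(algebraMap ℂ S (χ.coeff 0)) :=
    eq_neg_of_add_eq_zero_left hxz
  have h1 : x * z = 1 := by
    calc x * (algebraMap ℂ S (-(χ.coeff 0)⁻¹) * Polynomial.aeval x χ.divX)
        = algebraMap ℂ S (-(χ.coeff 0)⁻¹) * (x * Polynomial.aeval x χ.divX) := by
          rw [← mul_assoc, ← Algebra.commutes, mul_assoc]
      _ = algebraMap ℂ S (-(χ.coeff 0)⁻¹) * (-(algebraMap ℂ S (χ.coeff 0))) := by rw [hxy]
      _ = 1 := by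
          rw [← map_neg, ← _root_.map_mul, neg_mul_neg, inv_mul_cancel₀ hc0, _root_.map_one]
  have hzpoly : z = Polynomial.aeval x (Polynomial.C (-(χ.coeff 0)⁻¹) * χ.divX) := by
    rw [_root_.map_mul, Polynomial.aeval_C, hz]
  have hcomm : Commute x z := by
    have h := (Commute.all Polynomial.X (Polynomial.C (-(χ.coeff 0)⁻¹) * χ.divX)).map
      (Polynomial.aeval x).toRingHom
    rw [hzpoly]
    simp only [AlgHom.toRingHom_eq_coe, RingHom.coe_coe, Polynomial.aeval_X] at h
    exact h
  have h2 : z * x = 1 := by rw [← hcomm]; exact h1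
  exact ⟨⟨x, z, h1, h2⟩, rfl⟩

theorem exists_mem_adjoin_exp_eq {M : Matrix N N ℂ} (hM : IsUnit M) :
    ∃ C ∈ Algebra.adjoin ℂ {M}, NormedSpace.exp C = M := by
  letI : SeminormedRing (Matrix N N ℂ) := Matrix.linftyOpSemiNormedRing
  letI : NormedRing (Matrix N N ℂ) := Matrix.linftyOpNormedRing
  letI : NormedAlgebra ℂ (Matrix N N ℂ) := Matrix.linftyOpNormedAlgebra
  set R : Subalgebra ℂ (Matrix N N ℂ) := Algebra.adjoin ℂ {M} with hR
  haveI hfd : FiniteDimensional ℂ R := Subalgebra.finiteDimensional_toSubmodule.1 inferInstance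
  haveI : IsUniformAddGroup R := SeminormedAddCommGroup.to_isUniformAddGroup
  haveI : CompleteSpace R := FiniteDimensional.complete ℂ R
  have hRclosed : IsClosed (R : Set (Matrix N N ℂ)) :=
    Submodule.closed_of_finiteDimensional (Subalgebra.toSubmodule R)
  have hexp_mem : ∀ x : Matrix N N ℂ, x ∈ R → NormedSpace.exp x ∈ R := by
    intro x hx
    have hsum := (NormedSpace.exp_series_hasSum_exp' (𝕂 := ℂ) x).tendsto_sum_nat
    refine hRclosed.mem_of_tendsto hsum (Filter.Eventually.of_forall fun k => ?_)
    exact Subalgebra.sum_mem R fun i _ =>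
      Subalgebra.smul_mem R (pow_mem hx i) _
  set f : R → R := fun c => ⟨NormedSpace.exp (c : Matrix N N ℂ), hexp_mem _ c.2⟩ with hf
  have hnorm : ∀ x : R, ‖x‖ = ‖(x : Matrix N N ℂ)‖ := fun x => rfl
  have hexpD : HasStrictFDerivAt (NormedSpace.exp : Matrix N N ℂ → _)
      (1 : Matrix N N ℂ →L[ℂ] Matrix N N ℂ) 0 := hasStrictFDerivAt_exp_zero
  have hf' : HasStrictFDerivAt f
      ((ContinuousLinearEquiv.refl ℂ R : R ≃L[ℂ] R) : R →L[ℂ] R) 0 := by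
    apply HasStrictFDerivAt.of_isLittleO
    have h2 : Filter.Tendsto (fun q : R × R => ((q.1 : Matrix N N ℂ), (q.2 : Matrix N N ℂ)))
        (𝓝 (0, 0)) (𝓝 (0, 0)) := by
      have := (continuous_subtype_val.prodMap continuous_subtype_val).tendsto
        ((0 : R), (0 : R))
      exact this
    have h3 := hexpD.isLittleO.comp_tendsto h2
    rw [Asymptotics.isLittleO_iff] at h3 ⊢
    intro ε hε
    filter_upwards [h3 hε] with q hq
    rw [hnorm, hnorm]
    simp only [hf, ContinuousLinearEquiv.coe_refl', id_eq, AddSubgroupClass.coe_sub]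
    exact hq
  have hmap : Filter.map f (𝓝 0) = 𝓝 (f 0) := hf'.map_nhds_eq_of_equiv
  have hf0 : f 0 = 1 := by
    apply Subtype.coe_injective
    simpa [hf] using NormedSpace.exp_zero
  have hrange : Set.range f ∈ 𝓝 (1 : R) := by
    rw [← hf0, ← hmap, ← Set.image_univ]
    exact Filter.image_mem_map Filter.univ_mem
  have hcomm : ∀ a b : R, Commute (a : Matrix N N ℂ) (b : Matrix N N ℂ) :=
    fun a b => commute_adjoin a.2 b.2
  have hfadd : ∀ a b : R, f (a + b) = f a * f b := by
    intro a b
    apply Subtype.coe_injective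
    show NormedSpace.exp (((a + b : R)) : Matrix N N ℂ)
      = NormedSpace.exp (a : Matrix N N ℂ) * NormedSpace.exp (b : Matrix N N ℂ)
    rw [Subalgebra.coe_add]
    exact Matrix.exp_add_of_commute _ _ (hcomm a b)
  have hfunit : ∀ c : R, IsUnit (f c) := fun c =>
    ⟨⟨f c, f (-c), by rw [← hfadd, add_neg_cancel, hf0], by rw [← hfadd, neg_add_cancel, hf0]⟩,
      rfl⟩
  have hnhds_unit : ∀ u : R, IsUnit u →
      Filter.map (fun y : R => u * y) (𝓝 1) = 𝓝 u := by
    rintro _ ⟨u, rfl⟩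
    apply le_antisymm
    · have := (continuous_mul_left (u : R)).tendsto (1 : R)
      simpa [Filter.Tendsto] using this
    · have h2 := (continuous_mul_left ((u⁻¹ : Rˣ) : R)).tendsto (u : R)
      have h2' : Filter.map (fun y : R => ((u⁻¹ : Rˣ) : R) * y) (𝓝 (u : R)) ≤ 𝓝 (1 : R) := by
        simpa [Filter.Tendsto] using h2
      calc 𝓝 (u : R) = Filter.map (fun y : R => (u : R) * y)
            (Filter.map (fun y : R => ((u⁻¹ : Rˣ) : R) * y) (𝓝 (u : R))) := by
            rw [Filter.map_map]
            have : ((fun y : R => (u : R) * y) ∘ fun y : R => ((u⁻¹ : Rˣ) : R) * y) = id := by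
              funext y
              simp [Function.comp, ← mul_assoc]
            rw [this, Filter.map_id]
        _ ≤ Filter.map (fun y : R => (u : R) * y) (𝓝 (1 : R)) := Filter.map_mono h2'
  have hmul_range : ∀ c d : R, f c * f d ∈ Set.range f := fun c d =>
    ⟨c + d, hfadd c d⟩
  have hopen : IsOpen (Set.range f) := by
    rw [isOpen_iff_mem_nhds]
    rintro x ⟨c, rfl⟩
    rw [← hnhds_unit (f c) (hfunit c)]
    refine Filter.mem_map.2 (Filter.mem_of_superset hrange ?_)
    rintro y ⟨d, rfl⟩
    exact hmul_range c d
  set T : Set R := {x : R | IsUnit x} with hT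
  have h1T : (1 : R) ∈ T := isUnit_one
  have h1range : (1 : R) ∈ Set.range f := ⟨0, hf0⟩
  have hpath : IsPathConnected T := by
    refine ⟨1, h1T, ?_⟩
    intro y hy
    set φ : ℂ → R := fun t => 1 + t • (y - 1) with hφ
    have hφcont : Continuous φ := by
      apply continuous_const.add
      exact (continuous_id.smul continuous_const)
    have hφ0 : φ 0 = 1 := by simp [hφ]
    have hφ1 : φ 1 = y := by simp [hφ]
    set q : Polynomial ℂ := Matrix.det (Matrix.of fun i j =>
      Polynomial.C (((1 : R) : Matrix N N ℂ) i j)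
        + Polynomial.X * Polynomial.C ((((y : Matrix N N ℂ)) - 1) i j)) with hq
    have hqeval : ∀ t : ℂ, Polynomial.eval t q = Matrix.det ((φ t : R) : Matrix N N ℂ) := by
      intro t
      rw [hq, ← Polynomial.coe_evalRingHom, RingHom.map_det]
      congr 1
      ext i j
      simp [RingHom.mapMatrix_apply, hφ, Matrix.add_apply, Matrix.smul_apply, mul_comm]
    have hq0 : q ≠ 0 := by
      intro h
      have h2 := hqeval 0
      rw [h, hφ0] at h2
      simp at h2
    have hbad : Set.Countable {t : ℂ | Polynomial.IsRoot q t} :=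
      (Polynomial.finite_setOf_isRoot hq0).countable
    have hcompl : IsPathConnected {t : ℂ | Polynomial.IsRoot q t}ᶜ :=
      hbad.isPathConnected_compl_of_one_lt_rank
        (by rw [rank_real_complex]; norm_num)
    have hunit_of : ∀ t : ℂ, t ∈ {t : ℂ | Polynomial.IsRoot q t}ᶜ → φ t ∈ T := by
      intro t ht
      have hdet : IsUnit (Matrix.det ((φ t : R) : Matrix N N ℂ)) := by
        rw [← hqeval t]
        exact isUnit_iff_ne_zero.2 ht
      exact subalgebra_isUnit_of_isUnit R (φ t) ((Matrix.isUnit_iff_isUnit_det _).2 hdet)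
    have h0mem : (0 : ℂ) ∈ {t : ℂ | Polynomial.IsRoot q t}ᶜ := by
      intro h
      have h2 := hqeval 0
      rw [hφ0] at h2
      simp only [Set.mem_setOf_eq, Polynomial.IsRoot] at h
      rw [h] at h2
      simp at h2
    have h1mem : (1 : ℂ) ∈ {t : ℂ | Polynomial.IsRoot q t}ᶜ := by
      intro h
      have h2 := hqeval 1
      rw [hφ1] at h2
      simp only [Set.mem_setOf_eq, Polynomial.IsRoot] at h
      rw [h] at h2
      have : IsUnit (Matrix.det ((y : R) : Matrix N N ℂ)) :=
        (Matrix.isUnit_iff_isUnit_det _).1 (hy.map R.val)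
      exact this.ne_zero h2.symm
    have hjoin := hcompl.joinedIn 0 h0mem 1 h1mem
    have hjoin2 := hjoin.map hφcont
    rw [hφ0, hφ1] at hjoin2
    refine hjoin2.mono ?_
    rintro z ⟨t, ht, rfl⟩
    exact hunit_of t ht
  have hpc : IsPreconnected T := hpath.isConnected.isPreconnected
  have hsub : T ⊆ Set.range f := by
    intro x hx
    by_contra hxf
    set W : Set R := ⋃ (x : R) (_ : x ∈ T \ Set.range f),
      interior ((fun y : R => x * y) '' Set.range f) with hW
    have hVnhds : ∀ x : R, x ∈ T → (fun y : R => x * y) '' Set.range f ∈ 𝓝 x := by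
      intro x hxT
      rw [← hnhds_unit x hxT]
      exact Filter.image_mem_map hrange
    have hVdisj : ∀ x : R, x ∉ Set.range f →
        ((fun y : R => x * y) '' Set.range f) ∩ Set.range f = ∅ := by
      intro x hxf2
      rw [Set.eq_empty_iff_forall_notMem]
      rintro z ⟨⟨w, ⟨d, rfl⟩, rfl⟩, ⟨e, he⟩⟩
      apply hxf2
      have : x * f d * f (-d) = f e * f (-d) := by rw [he]
      rw [mul_assoc, ← hfadd, add_neg_cancel, hf0, mul_one] at this
      exact ⟨e + -d, by rw [hfadd, this]⟩
    have hWopen : IsOpen W := isOpen_iUnion fun x => isOpen_iUnion fun _ => isOpen_interior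
    have hWdisj : W ∩ Set.range f = ∅ := by
      rw [Set.eq_empty_iff_forall_notMem]
      rintro z ⟨hzW, hzf⟩
      rw [hW, Set.mem_iUnion] at hzW
      obtain ⟨w, hzW⟩ := hzW
      rw [Set.mem_iUnion] at hzW
      obtain ⟨hw, hzint⟩ := hzW
      have hzV := interior_subset hzint
      have h2 := hVdisj w hw.2
      rw [Set.eq_empty_iff_forall_notMem] at h2
      exact h2 z ⟨hzV, hzf⟩
    have hTsub : T ⊆ Set.range f ∪ W := by
      intro z hz
      by_cases hzf : z ∈ Set.range f
      · exact Or.inl hzf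
      · refine Or.inr ?_
        rw [hW, Set.mem_iUnion]
        refine ⟨z, ?_⟩
        rw [Set.mem_iUnion]
        exact ⟨⟨hz, hzf⟩, mem_interior_iff_mem_nhds.2 (hVnhds z hz)⟩
    have hmeet1 : (T ∩ Set.range f).Nonempty := ⟨1, h1T, h1range⟩
    have hmeet2 : (T ∩ W).Nonempty := by
      refine ⟨x, hx, ?_⟩
      rw [hW, Set.mem_iUnion]
      refine ⟨x, ?_⟩
      rw [Set.mem_iUnion]
      exact ⟨⟨hx, hxf⟩, mem_interior_iff_mem_nhds.2 (hVnhds x hx)⟩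
    obtain ⟨z, _, hz2, hz3⟩ := hpc (Set.range f) W hopen hWopen hTsub hmeet1 hmeet2
    rw [Set.eq_empty_iff_forall_notMem] at hWdisj
    exact hWdisj z ⟨hz3, hz2⟩
  have hMR : M ∈ R := Algebra.subset_adjoin (Set.mem_singleton M)
  have hMT : (⟨M, hMR⟩ : R) ∈ T := subalgebra_isUnit_of_isUnit R _ hM
  obtain ⟨c, hc⟩ := hsub hMT
  exact ⟨(c : Matrix N N ℂ), c.2, congrArg Subtype.val hc⟩

end AnalyticCore


lemma bcirc_tpow (X : Fin p → Matrix (Fin n) (Fin n) ℂ) (m : ℕ) :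
    bcirc (tpow X m) = bcirc X ^ m := by
  induction m with
  | zero => rw [tpow, bcirc_tId, pow_zero]
  | succ k ih => rw [tpow, bcirc_tmul, ih, pow_succ]


end Aux

/-- every invertible tensor has an `α`-th root `B^α = exp(α · log B)`
for every nonzero `α`; in particular `X^m = A` is solvable for each positive
integer `m`. -/
theorem tensor_alpha_root {n p : ℕ} [NeZero p]
    (A : Fin p → Matrix (Fin n) (Fin n) ℂ) (hA : TInvertible A)
    (α : ℂ) (hα : α ≠ 0) :
    (∃ B L : Fin p → Matrix (Fin n) (Fin n) ℂ, texp L = B ∧ texp (α • L) = A) ∧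
      ∀ m : ℕ, 0 < m → ∃ X : Fin p → Matrix (Fin n) (Fin n) ℂ, tpow X m = A := by
  obtain ⟨Binv, hAB, hBA⟩ := hA
  have hunit : IsUnit (bcirc A) := by
    refine ⟨⟨bcirc A, bcirc Binv, ?_, ?_⟩, rfl⟩
    · rw [← bcirc_tmul, hAB, bcirc_tId]
    · rw [← bcirc_tmul, hBA, bcirc_tId]
  obtain ⟨C, hCR, hCexp⟩ := exists_mem_adjoin_exp_eq hunit
  have hCS : bcShift C := bcShift_adjoin (bcShift_bcirc A) hCR
  have hCb : bcirc (tfold C) = C := bcirc_tfold_of_bcShift hCS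
  have htexp : ∀ β : ℂ, texp (β • tfold C) = tfold (NormedSpace.exp (β • C)) := by
    intro β
    rw [texp, bcirc_smul, hCb]
  have hbcirc_texp : ∀ β : ℂ, bcirc (texp (β • tfold C)) = NormedSpace.exp (β • C) := by
    intro β
    rw [htexp β]
    exact bcirc_tfold_of_bcShift (bcShift_exp (bcShift_smul β hCS))
  have htexp_one : texp (tfold C) = A := by
    rw [texp, hCb, hCexp, tfold_bcirc]
  constructor
  · refine ⟨texp (α⁻¹ • tfold C), α⁻¹ • tfold C, rfl, ?_⟩
    rw [smul_smul, mul_inv_cancel₀ hα, one_smul, htexp_one]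
  · intro m hm
    refine ⟨texp ((m : ℂ)⁻¹ • tfold C), ?_⟩
    have hmne : (m : ℂ) ≠ 0 := Nat.cast_ne_zero.2 hm.ne'
    apply bcirc_injective
    rw [bcirc_tpow, hbcirc_texp ((m : ℂ)⁻¹), ← Matrix.exp_nsmul]
    have hsm : (m • ((m : ℂ)⁻¹ • C) : Matrix (Fin p × Fin n) (Fin p × Fin n) ℂ) = C := by
      rw [← Nat.cast_smul_eq_nsmul ℂ, smul_smul, mul_inv_cancel₀ hmne, one_smul]
    rw [hsm, hCexp]

end
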